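/- Consider one-dimensional data where group 0 has density p₀ uniform with value 1/(2m) on [-m, m/2] and 1/m on [m/2, m] (equivalently the piecewise distribution with P(y=0|z=0)=3/4 mass below m/2), and group 1 has density p₁ uniform 1/(2m) on [-m, m]. Labels are y = 1{x ≥ m/2} for group 0 and y = 1{x ≥ 0} for group 1, with P(z=0)=1/4, P(z=1)=3/4. Among threshold classifiers (τ₀, τ₁) satisfying the Equal Improvability condition with budget δ = m/2, the classifier (τ₀, τ₁) = (0, 0) minimizes the classification error, achieving error 1/16. -/

import Mathlib

set_option maxHeartbeats 1000000

open MeasureTheory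

/-- Density of group 0: value 1/(2m) on [-m, m/2) and 1/m on [m/2, m]. -/
noncomputable def p0 (m x : ℝ) : ℝ :=
  if -m ≤ x ∧ x < m / 2 then 1 / (2 * m)
  else if m / 2 ≤ x ∧ x ≤ m then 1 / m else 0

/-- Density of group 1: uniform 1/(2m) on [-m, m]. -/
noncomputable def p1 (m x : ℝ) : ℝ :=
  if -m ≤ x ∧ x ≤ m then 1 / (2 * m) else 0

/-- Misclassification mass of a threshold classifier τ against true threshold c. -/
noncomputable def errZ (p : ℝ → ℝ) (τ c : ℝ) : ℝ :=
  ∫ x in {x : ℝ | (τ ≤ x) ≠ (c ≤ x)}, p x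

/-- Total classification error with P(z=0)=1/4, P(z=1)=3/4, true thresholds m/2 and 0. -/
noncomputable def totalError (m τ₀ τ₁ : ℝ) : ℝ :=
  (1 / 4) * errZ (p0 m) τ₀ (m / 2) + (3 / 4) * errZ (p1 m) τ₁ 0

/-- Equal Improvability condition with effort budget δ. -/
def EIcond (m δ τ₀ τ₁ : ℝ) : Prop :=
  (∫ x in Set.Ico (τ₀ - δ) τ₀, p0 m x) / (∫ x in Set.Iio τ₀, p0 m x)
    = (∫ x in Set.Ico (τ₁ - δ) τ₁, p1 m x) / (∫ x in Set.Iio τ₁, p1 m x)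

section AuxLemmas
open Set

lemma ae_ne_real (c : ℝ) : ∀ᵐ x : ℝ, x ≠ c := by
  have : volume ({c} : Set ℝ) = 0 := Real.volume_singleton
  rw [ae_iff]
  simpa using this

lemma p1_ae (m : ℝ) :
    p1 m =ᵐ[volume] (Ico (-m) m).indicator (fun _ => 1 / (2 * m)) := by
  filter_upwards [ae_ne_real m] with x hx
  simp only [p1, Set.indicator_apply, Set.mem_Ico]
  by_cases h1 : -m ≤ x
  · by_cases h2 : x < m
    · simp [h1, h2, le_of_lt h2]
    · have h3 : ¬ x ≤ m := fun h => h2 (lt_of_le_of_ne h hx)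
      simp [h1, h2, h3]
  · simp [h1]

lemma p0_ae (m : ℝ) :
    p0 m =ᵐ[volume] (fun x => (Ico (-m) (m/2)).indicator (fun _ => 1 / (2 * m)) x
      + (Ico (m/2) m).indicator (fun _ => 1 / m) x) := by
  filter_upwards [ae_ne_real m] with x hx
  simp only [p0, Set.indicator_apply, Set.mem_Ico]
  by_cases h1 : -m ≤ x ∧ x < m / 2
  · have : ¬ (m/2 ≤ x) := not_le.2 h1.2
    simp [h1, h1.1, h1.2, this]
  · by_cases h2 : m / 2 ≤ x ∧ x ≤ m
    · have hxm : x < m := lt_of_le_of_ne h2.2 hx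
      have : ¬ x < m/2 := not_lt.2 h2.1
      simp [h1, h2, h2.1, hxm, this]
    · push_neg at h1 h2
      have hA : ¬(m/2 ≤ x ∧ x ≤ m) := fun h => absurd (h2 h.1) (not_lt.2 h.2)
      have hB : ¬(-m ≤ x ∧ x < m/2) := fun h => absurd (h1 h.1) (not_le.2 h.2)
      have hC : ¬(m/2 ≤ x ∧ x < m) := fun h => absurd (h2 h.1) (not_lt.2 h.2.le)
      simp [hA, hB, hC]

lemma ind_int (c a b : ℝ) : Integrable ((Ico a b).indicator (fun _ => c)) volume := by
  rw [integrable_indicator_iff measurableSet_Ico]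
  exact integrableOn_const measure_Ico_lt_top.ne (by simp)

lemma int_p1 (m : ℝ) (s : Set ℝ) (hs : MeasurableSet s) :
    ∫ x in s, p1 m x = (volume (s ∩ Ico (-m) m)).toReal * (1 / (2*m)) := by
  rw [setIntegral_congr_ae hs ((p1_ae m).mono fun x hx _ => hx),
      setIntegral_indicator measurableSet_Ico, setIntegral_const, smul_eq_mul]
  rfl

lemma int_p0 (m : ℝ) (s : Set ℝ) (hs : MeasurableSet s) :
    ∫ x in s, p0 m x = (volume (s ∩ Ico (-m) (m/2))).toReal * (1/(2*m))
      + (volume (s ∩ Ico (m/2) m)).toReal * (1/m) := by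
  rw [setIntegral_congr_ae hs ((p0_ae m).mono fun x hx _ => hx),
      integral_add ((ind_int _ _ _).integrableOn) ((ind_int _ _ _).integrableOn),
      setIntegral_indicator measurableSet_Ico, setIntegral_indicator measurableSet_Ico,
      setIntegral_const, setIntegral_const, smul_eq_mul, smul_eq_mul]
  rfl

lemma vol_Ico_inter (a b c d : ℝ) :
    (volume (Ico a b ∩ Ico c d)).toReal = max (min b d - max a c) 0 := by
  rw [Set.Ico_inter_Ico, Real.volume_Ico, ENNReal.toReal_ofReal']

lemma Iio_inter_Ico' (a c d : ℝ) : Iio a ∩ Ico c d = Ico c (min a d) := by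
  ext x
  simp only [mem_inter_iff, mem_Iio, mem_Ico, lt_min_iff]
  tauto

lemma vol_Iio_inter (a c d : ℝ) :
    (volume (Iio a ∩ Ico c d)).toReal = max (min a d - c) 0 := by
  rw [Iio_inter_Ico', Real.volume_Ico, ENNReal.toReal_ofReal']

lemma p1_Ico (m a b : ℝ) :
    ∫ x in Ico a b, p1 m x = max (min b m - max a (-m)) 0 * (1/(2*m)) := by
  rw [int_p1 m _ measurableSet_Ico, vol_Ico_inter]

lemma p1_Iio (m a : ℝ) :
    ∫ x in Iio a, p1 m x = max (min a m + m) 0 * (1/(2*m)) := by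
  rw [int_p1 m _ measurableSet_Iio, vol_Iio_inter, sub_neg_eq_add]

lemma p0_Ico (m a b : ℝ) :
    ∫ x in Ico a b, p0 m x = max (min b (m/2) - max a (-m)) 0 * (1/(2*m))
      + max (min b m - max a (m/2)) 0 * (1/m) := by
  rw [int_p0 m _ measurableSet_Ico, vol_Ico_inter, vol_Ico_inter]

lemma p0_Iio (m a : ℝ) :
    ∫ x in Iio a, p0 m x = max (min a (m/2) + m) 0 * (1/(2*m))
      + max (min a m - m/2) 0 * (1/m) := by
  rw [int_p0 m _ measurableSet_Iio, vol_Iio_inter, vol_Iio_inter, sub_neg_eq_add]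

lemma errSet (τ c : ℝ) : {x : ℝ | (τ ≤ x) ≠ (c ≤ x)} = Ico (min τ c) (max τ c) := by
  ext x
  simp only [mem_setOf_eq, ne_eq, eq_iff_iff, mem_Ico, min_le_iff, lt_max_iff]
  by_cases h1 : τ ≤ x <;> by_cases h2 : c ≤ x
  · simp [h1, h2]
  · simp [h1, h2, not_le.1 h2]
  · simp [h1, h2, not_le.1 h1]
  · simp [h1, h2]


lemma aux_ei (m : ℝ) (hm : 0 < m) : EIcond m (m/2) 0 0 := by
  unfold EIcond
  rw [p0_Ico, p0_Iio, p1_Ico, p1_Iio]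
  rw [show (0:ℝ) - m/2 = -(m/2) by ring,
      min_eq_left (by linarith : (0:ℝ) ≤ m/2),
      min_eq_left (by linarith : (0:ℝ) ≤ m),
      max_eq_left (by linarith : -m ≤ -(m/2)),
      max_eq_right (by linarith : -(m/2) ≤ m/2),
      show (0:ℝ) - -(m/2) = m/2 by ring,
      max_eq_left (by linarith : (0:ℝ) ≤ m/2),
      max_eq_right (by linarith : (0:ℝ) - m/2 ≤ 0),
      show (0:ℝ) + m = m by ring,
      max_eq_left (by linarith : (0:ℝ) ≤ m)]
  ring


lemma aux_err (m : ℝ) (hm : 0 < m) : totalError m 0 0 = 1/16 := by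
  unfold totalError errZ
  rw [errSet, errSet, p0_Ico, p1_Ico]
  rw [min_eq_left (by linarith : (0:ℝ) ≤ m/2),
      max_eq_right (by linarith : (0:ℝ) ≤ m/2),
      min_self, min_eq_left (by linarith : m/2 ≤ m),
      max_eq_left (by linarith : -m ≤ (0:ℝ)),
      max_eq_left (by linarith : (0:ℝ) ≤ m/2 - 0),
      show m/2 - m/2 = (0:ℝ) by ring, max_self, min_self]
  norm_num
  field_simp
  ring


lemma aux_main (m : ℝ) (hm : 0 < m) (τ₀ τ₁ : ℝ) (hEI : EIcond m (m/2) τ₀ τ₁) :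
    (1:ℝ)/16 ≤ totalError m τ₀ τ₁ := by
  unfold EIcond at hEI
  rw [p0_Ico, p0_Iio, p1_Ico, p1_Iio] at hEI
  unfold totalError errZ
  rw [errSet, errSet, p0_Ico, p1_Ico]
  have hm2 : (0:ℝ) < 2*m := by linarith
  -- E0 and E1 are nonnegative
  have hE0 : (0:ℝ) ≤ max (min (max τ₀ (m/2)) (m/2) - max (min τ₀ (m/2)) (-m)) 0 * (1/(2*m))
      + max (min (max τ₀ (m/2)) m - max (min τ₀ (m/2)) (m/2)) 0 * (1/m) := by
    have := le_max_right (min (max τ₀ (m/2)) (m/2) - max (min τ₀ (m/2)) (-m)) 0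
    have := le_max_right (min (max τ₀ (m/2)) m - max (min τ₀ (m/2)) (m/2)) 0
    have h1 : (0:ℝ) < 1/(2*m) := by positivity
    have h2 : (0:ℝ) < 1/m := by positivity
    nlinarith
  rcases le_or_gt (m/6) τ₁ with hc1 | hc1
  · -- τ₁ large positive: E1 ≥ 1/12
    have h1 : max τ₁ (0:ℝ) = τ₁ := max_eq_left (by linarith)
    have h2 : min τ₁ (0:ℝ) = 0 := min_eq_right (by linarith)
    rw [h1, h2, max_eq_left (by linarith : -m ≤ (0:ℝ))]
    have h3 : m/6 ≤ min τ₁ m := le_min (by linarith) (by linarith)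
    have h4 : m/6 ≤ max (min τ₁ m - 0) 0 := le_trans (by linarith [h3]) (le_max_left _ _)
    have h5 : (1:ℝ)/12 ≤ max (min τ₁ m - 0) 0 * (1/(2*m)) := by
      have := mul_le_mul_of_nonneg_right h4 (le_of_lt (by positivity : (0:ℝ) < 1/(2*m)))
      have he : m/6 * (1/(2*m)) = 1/12 := by field_simp; ring
      linarith [he ▸ this]
    nlinarith
  rcases le_or_gt τ₁ (-(m/6)) with hc2 | hc2
  · -- τ₁ large negative: E1 ≥ 1/12
    have h1 : max τ₁ (0:ℝ) = 0 := max_eq_right (by linarith)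
    have h2 : min τ₁ (0:ℝ) = τ₁ := min_eq_left (by linarith)
    rw [h1, h2, min_eq_left (by linarith : (0:ℝ) ≤ m)]
    have h3 : max τ₁ (-m) ≤ -(m/6) := max_le (by linarith) (by linarith)
    have h4 : m/6 ≤ max (0 - max τ₁ (-m)) 0 := le_trans (by linarith) (le_max_left _ _)
    have h5 : (1:ℝ)/12 ≤ max (0 - max τ₁ (-m)) 0 * (1/(2*m)) := by
      have := mul_le_mul_of_nonneg_right h4 (le_of_lt (by positivity : (0:ℝ) < 1/(2*m)))
      have he : m/6 * (1/(2*m)) = 1/12 := by field_simp; ring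
      linarith [he ▸ this]
    nlinarith
  · -- main case: -m/6 < τ₁ < m/6
    have hD : (0:ℝ) < τ₁ + m := by linarith
    rw [min_eq_left (by linarith : τ₁ ≤ m),
        max_eq_left (by linarith : -m ≤ τ₁ - m/2),
        show τ₁ - (τ₁ - m/2) = m/2 by ring,
        max_eq_left (by linarith : (0:ℝ) ≤ m/2),
        max_eq_left (by linarith : (0:ℝ) ≤ τ₁ + m),
        mul_div_mul_right _ _ (ne_of_gt (one_div_pos.2 hm2))] at hEI
    have hRpos : 0 < (m/2)/(τ₁+m) := div_pos (by linarith) hD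
    set G0 := max (min τ₀ (m/2) - max (τ₀ - m/2) (-m)) 0 * (1/(2*m))
      + max (min τ₀ m - max (τ₀ - m/2) (m/2)) 0 * (1/m) with hG0def
    set F0 := max (min τ₀ (m/2) + m) 0 * (1/(2*m)) + max (min τ₀ m - m/2) 0 * (1/m) with hF0def
    have hp1 : (0:ℝ) < 1/(2*m) := one_div_pos.2 hm2
    have hp2 : (0:ℝ) < 1/m := one_div_pos.2 hm
    have hF0nn : 0 ≤ F0 := by
      rw [hF0def]
      exact add_nonneg (mul_nonneg (le_max_right _ _) hp1.le)
        (mul_nonneg (le_max_right _ _) hp2.le)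
    rcases eq_or_lt_of_le hF0nn with h0 | hF0pos
    · exfalso
      rw [← h0, div_zero] at hEI
      exact absurd hEI.symm (ne_of_gt hRpos)
    have hτm : -m < τ₀ := by
      by_contra h
      push_neg at h
      have hz : F0 = 0 := by
        rw [hF0def, min_eq_left (by linarith : τ₀ ≤ m/2), min_eq_left (by linarith : τ₀ ≤ m),
            max_eq_right (by linarith : τ₀ + m ≤ 0), max_eq_right (by linarith : τ₀ - m/2 ≤ 0)]
        ring
      linarith
    rcases le_or_gt τ₀ (-(m/2)) with hA | hA
    · -- -m < τ₀ ≤ -m/2 : ratio is 1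
      exfalso
      rw [hG0def, hF0def, min_eq_left (by linarith : τ₀ ≤ m/2),
          min_eq_left (by linarith : τ₀ ≤ m),
          max_eq_right (by linarith : τ₀ - m/2 ≤ -m),
          max_eq_right (by linarith : τ₀ - m/2 ≤ m/2),
          sub_neg_eq_add,
          max_eq_left (by linarith : (0:ℝ) ≤ τ₀ + m),
          show τ₀ - m/2 = τ₀ - m/2 by rfl,
          max_eq_right (by linarith : τ₀ - m/2 ≤ 0)] at hEI
      have hq : (0:ℝ) < (τ₀+m)*(1/(2*m)) + 0*(1/m) := by nlinarith
      rw [div_self (ne_of_gt hq), eq_comm, div_eq_one_iff_eq (ne_of_gt hD)] at hEI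
      linarith
    rcases le_or_gt τ₀ (m/2) with hB | hB
    · -- -m/2 < τ₀ ≤ m/2 : forces τ₀ = τ₁
      rw [hG0def, hF0def, min_eq_left (by linarith : τ₀ ≤ m/2),
          min_eq_left (by linarith : τ₀ ≤ m),
          max_eq_left (by linarith : -m ≤ τ₀ - m/2),
          max_eq_right (by linarith : τ₀ - m/2 ≤ m/2),
          show τ₀ - (τ₀ - m/2) = m/2 by ring,
          max_eq_left (by linarith : (0:ℝ) ≤ m/2),
          max_eq_right (by linarith : τ₀ - m/2 ≤ 0),
          max_eq_left (by linarith : (0:ℝ) ≤ τ₀ + m)] at hEI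
      have hD0 : (0:ℝ) < τ₀ + m := by linarith
      clear hE0 hF0nn hF0pos
      have ht : τ₀ = τ₁ := by
        rw [zero_mul, add_zero, add_zero, mul_div_mul_right _ _ (ne_of_gt hp1),
            div_eq_div_iff (ne_of_gt hD0) (ne_of_gt hD)] at hEI
        have := mul_left_cancel₀ (show (m:ℝ)/2 ≠ 0 by positivity) hEI
        linarith
      rw [← ht]
      rw [min_eq_left (by linarith : τ₀ ≤ m/2),
          max_eq_right (by linarith : τ₀ ≤ m/2),
          min_self, min_eq_left (by linarith : m/2 ≤ m),
          max_eq_left (by linarith : -m ≤ τ₀),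
          show m/2 - m/2 = (0:ℝ) by ring, max_self,
          max_eq_left (by linarith : (0:ℝ) ≤ m/2 - τ₀)]
      rcases le_or_gt τ₀ 0 with h | h
      · rw [max_eq_right h, min_eq_left h, min_eq_left hm.le,
            max_eq_left (by linarith : -m ≤ τ₀),
            max_eq_left (by linarith : (0:ℝ) ≤ 0 - τ₀)]
        have hmc : m * (1/(2*m)) = 1/2 := by field_simp <;> ring
        nlinarith [hmc, mul_nonneg (show (0:ℝ) ≤ -τ₀ by linarith) hp1.le]
      · rw [max_eq_left h.le, min_eq_right h.le, min_eq_left (by linarith : τ₀ ≤ m),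
            max_eq_left (by linarith : -m ≤ (0:ℝ)),
            max_eq_left (by linarith : (0:ℝ) ≤ τ₀ - 0)]
        have hmc : m * (1/(2*m)) = 1/2 := by field_simp <;> ring
        nlinarith [hmc, mul_nonneg h.le hp1.le]
    rcases le_or_gt τ₀ m with hC | hC
    · -- m/2 < τ₀ ≤ m : ratio ≤ 2/5, contradiction
      exfalso
      rw [hG0def, hF0def, min_eq_right (by linarith : m/2 ≤ τ₀),
          min_eq_left (by linarith : τ₀ ≤ m),
          max_eq_left (by linarith : -m ≤ τ₀ - m/2),
          max_eq_right (by linarith : τ₀ - m/2 ≤ m/2),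
          show m/2 - (τ₀ - m/2) = m - τ₀ by ring,
          max_eq_left (by linarith : (0:ℝ) ≤ m - τ₀),
          max_eq_left (by linarith : (0:ℝ) ≤ τ₀ - m/2),
          max_eq_left (by linarith : (0:ℝ) ≤ m/2 + m)] at hEI
      have e1 : (m-τ₀)*(1/(2*m)) + (τ₀-m/2)*(1/m) = τ₀ * (1/(2*m)) := by
        field_simp; ring
      have e2 : (m/2+m)*(1/(2*m)) + (τ₀-m/2)*(1/m) = (2*τ₀ + m/2)*(1/(2*m)) := by
        field_simp; ring
      rw [e1, e2, mul_div_mul_right _ _ (ne_of_gt hp1)] at hEI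
      have hden : (0:ℝ) < 2*τ₀ + m/2 := by linarith
      rw [div_eq_div_iff (ne_of_gt hden) (ne_of_gt hD)] at hEI
      have hpos0 : (0:ℝ) < τ₀ := by linarith
      nlinarith [hEI, mul_lt_mul_of_pos_left hc1 hpos0,
        mul_le_mul_of_nonneg_right hC (by linarith : (0:ℝ) ≤ m/6)]
    · -- τ₀ > m : ratio ≤ 2/5, contradiction
      exfalso
      rw [hG0def, hF0def, min_eq_right (by linarith : m/2 ≤ τ₀),
          min_eq_right (by linarith : m ≤ τ₀),
          max_eq_left (by linarith : -m ≤ τ₀ - m/2),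
          max_eq_left (by linarith : m/2 ≤ τ₀ - m/2),
          max_eq_right (by linarith : m/2 - (τ₀ - m/2) ≤ 0),
          max_eq_left (by linarith : (0:ℝ) ≤ m/2 + m),
          max_eq_left (by linarith : (0:ℝ) ≤ m - m/2)] at hEI
      have hq : max (m - (τ₀ - m/2)) 0 ≤ m/2 := max_le (by linarith) (by linarith)
      have hqnn : (0:ℝ) ≤ max (m - (τ₀ - m/2)) 0 := le_max_right _ _
      have hdenval : (m/2+m)*(1/(2*m)) + (m-m/2)*(1/m) = 5/4 := by field_simp; ring
      rw [hdenval] at hEI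
      have hLHS : (0*(1/(2*m)) + max (m - (τ₀ - m/2)) 0*(1/m)) / (5/4 : ℝ) ≤ 2/5 := by
        rw [div_le_iff₀ (by norm_num : (0:ℝ) < 5/4)]
        have h1 : max (m - (τ₀-m/2)) 0 * (1/m) ≤ (m/2)*(1/m) :=
          mul_le_mul_of_nonneg_right hq hp2.le
        have h2 : (m/2)*(1/m) = 1/2 := by field_simp <;> ring
        nlinarith
      rw [hEI, div_le_iff₀ hD] at hLHS
      linarith

end AuxLemmas

/-- Among threshold classifiers satisfying EI with budget δ = m/2, the classifier
(τ₀, τ₁) = (0, 0) minimizes the classification error, achieving error 1/16. -/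
theorem optimal_ei_classifier (m : ℝ) (hm : 0 < m) :
    EIcond m (m / 2) 0 0 ∧ totalError m 0 0 = 1 / 16 ∧
    ∀ τ₀ τ₁ : ℝ, EIcond m (m / 2) τ₀ τ₁ → totalError m 0 0 ≤ totalError m τ₀ τ₁ := by
  refine ⟨by simpa using aux_ei m hm, by simpa using aux_err m hm, fun τ₀ τ₁ h => ?_⟩
  rw [aux_err m hm]
  exact aux_main m hm τ₀ τ₁ h
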